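/- Let N be a finite group containing two normal subgroups K₁ and K₂ with K₁ ≅ K₂, K₁ ∩ K₂ = 1, and N/K₁ ≅ N/K₂ ≅ SL(2,3). Then N is isomorphic to one of: SL(2,3), SL(2,3) × SL(2,3), (Q₈ × Q₈) ⋊ C₃ (with C₃ acting simultaneously as the order-3 automorphism i ↦ j, j ↦ ij on each factor), or SL(2,3) × C₂. -/

import Mathlib

abbrev SL23 := Matrix.SpecialLinearGroup (Fin 2) (ZMod 3)

instance : DecidableEq SL23 := fun a b => decidable_of_iff (a.1 = b.1) Subtype.ext_iff.symm

namespace SLaux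

set_option maxRecDepth 8000000

/-! ### basic elements and subgroups -/

def u₀ : SL23 := ⟨!![1,1;0,1], by decide⟩
def t₀ : SL23 := ⟨!![0,-1;1,0], by decide⟩
def zc : SL23 := ⟨!![-1,0;0,-1], by decide⟩

def Zc : Subgroup SL23 where
  carrier := {g | g ^ 2 = 1}
  one_mem' := by decide
  mul_mem' {a b} := by revert a b; decide
  inv_mem' {a} := by revert a; decide

def Qc : Subgroup SL23 where
  carrier := {g | g ^ 4 = 1}
  one_mem' := by decide
  mul_mem' {a b} := by revert a b; decide
  inv_mem' {a} := by revert a; decide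

lemma mem_Zc {g : SL23} : g ∈ Zc ↔ g ^ 2 = 1 := Iff.rfl
lemma mem_Qc {g : SL23} : g ∈ Qc ↔ g ^ 4 = 1 := Iff.rfl

instance : DecidablePred (· ∈ Zc) := fun g => inferInstanceAs (Decidable (g^2 = 1))
instance : DecidablePred (· ∈ Qc) := fun g => inferInstanceAs (Decidable (g^4 = 1))

lemma card_SL : Nat.card SL23 = 24 := by
  rw [Nat.card_eq_fintype_card]; decide
lemma card_Zc : Nat.card Zc = 2 := by
  rw [Nat.card_eq_fintype_card]; decide
lemma card_Qc : Nat.card Qc = 8 := by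
  rw [Nat.card_eq_fintype_card]; decide
lemma fcard_Qc : Fintype.card Qc = 8 := by decide

/-! ### decide lemmas about SL23 -/

lemma conj3 : ∀ g x : SL23, g^3 = 1 → g ≠ 1 → x^4 = 1 →
    ∃ h k l : SL23, x = (h*g*h⁻¹)*(k*g*k⁻¹)*(l*g*l⁻¹) := by decide
lemma order3_coset : ∀ g x : SL23, g^3 = 1 → g ≠ 1 → ∃ e : Fin 3, (x * g^(e:ℕ))^4 = 1 := by
  decide
lemma order4_conj : ∀ g x : SL23, g^4 = 1 → g^2 ≠ 1 → x^4 = 1 → x^2 ≠ 1 →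
    ∃ h : SL23, x = h*g*h⁻¹ := by decide
lemma order4_sq : ∀ g : SL23, g^4 = 1 → g^2 ≠ 1 → g^2 = zc := by decide
lemma order_split : ∀ g : SL23, g^4 ≠ 1 → (g^3 = 1 ∧ g ≠ 1) ∨ ((g^2)^3 = 1 ∧ g^2 ≠ 1) := by
  decide
lemma Zc_cases : ∀ g : SL23, g^2 = 1 → g = 1 ∨ g = zc := by decide

theorem normal_classification (M : Subgroup SL23) (hM : M.Normal) :
    M = ⊥ ∨ M = Zc ∨ M = Qc ∨ M = ⊤ := by
  by_cases hT : ∃ g ∈ M, g^4 ≠ 1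
  · right; right; right
    obtain ⟨g, hgM, hg4⟩ := hT
    obtain ⟨g', hg'M, h3, hne⟩ : ∃ g' , g' ∈ M ∧ g'^3 = 1 ∧ g' ≠ 1 := by
      rcases order_split g hg4 with ⟨h1, h2⟩ | ⟨h1, h2⟩
      · exact ⟨g, hgM, h1, h2⟩
      · exact ⟨g^2, M.pow_mem hgM 2, h1, h2⟩
    have hQM : ∀ x : SL23, x^4 = 1 → x ∈ M := by
      intro x hx
      obtain ⟨h, k, l, rfl⟩ := conj3 g' x h3 hne hx
      exact M.mul_mem (M.mul_mem (hM.conj_mem _ hg'M h) (hM.conj_mem _ hg'M k))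
        (hM.conj_mem _ hg'M l)
    rw [eq_top_iff]
    intro x _
    obtain ⟨e, he⟩ := order3_coset g' x h3 hne
    have h1 : x * g'^(e:ℕ) ∈ M := hQM _ he
    have := M.mul_mem h1 (M.inv_mem (M.pow_mem hg'M (e:ℕ)))
    simpa [mul_assoc] using this
  · push_neg at hT
    have hMQ : M ≤ Qc := fun g hg => hT g hg
    by_cases h4 : ∃ g ∈ M, g^2 ≠ 1
    · right; right; left
      obtain ⟨g, hgM, hg2⟩ := h4
      have hg4 : g^4 = 1 := hMQ hgM
      apply le_antisymm hMQ
      intro x hx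
      rw [mem_Qc] at hx
      by_cases hx2 : x^2 = 1
      · rcases Zc_cases x hx2 with rfl | rfl
        · exact M.one_mem
        · rw [← order4_sq g hg4 hg2]; exact M.pow_mem hgM 2
      · obtain ⟨h, rfl⟩ := order4_conj g x hg4 hg2 hx hx2
        exact hM.conj_mem g hgM h
    · push_neg at h4
      have hMZ : M ≤ Zc := fun g hg => h4 g hg
      by_cases hz : zc ∈ M
      · right; left
        apply le_antisymm hMZ
        intro x hx
        rcases Zc_cases x hx with rfl | rfl
        · exact M.one_mem
        · exact hz
      · left
        rw [eq_bot_iff]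
        intro x hx
        rcases Zc_cases x (hMZ hx) with rfl | rfl
        · exact Subgroup.mem_bot.mpr rfl
        · exact absurd hx hz

/-! ### generation by u₀, t₀ -/

def w₀ : SL23 := u₀ * t₀ * u₀⁻¹

lemma Q_word : ∀ x : SL23, x^4 = 1 → ∃ a : Fin 4, ∃ b : Fin 2, x = t₀^(a:ℕ) * w₀^(b:ℕ) := by
  decide
lemma coset_word : ∀ x : SL23, ∃ e : Fin 3, (x * u₀^(e:ℕ))^4 = 1 := by decide
lemma coset_word_inv : ∀ x : SL23, ∃ e : Fin 3, (x * (u₀^(e:ℕ))⁻¹)^4 = 1 := by decide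

theorem gen_ut : Subgroup.closure ({u₀, t₀} : Set SL23) = ⊤ := by
  rw [eq_top_iff]
  have hu : u₀ ∈ Subgroup.closure ({u₀, t₀} : Set SL23) :=
    Subgroup.subset_closure (by simp)
  have ht : t₀ ∈ Subgroup.closure ({u₀, t₀} : Set SL23) :=
    Subgroup.subset_closure (by simp)
  have hw : w₀ ∈ Subgroup.closure ({u₀, t₀} : Set SL23) :=
    Subgroup.mul_mem _ (Subgroup.mul_mem _ hu ht) (Subgroup.inv_mem _ hu)
  have hQ : ∀ x : SL23, x^4 = 1 → x ∈ Subgroup.closure ({u₀, t₀} : Set SL23) := by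
    intro x hx
    obtain ⟨a, b, rfl⟩ := Q_word x hx
    exact Subgroup.mul_mem _ (Subgroup.pow_mem _ ht _) (Subgroup.pow_mem _ hw _)
  intro x _
  obtain ⟨e, he⟩ := coset_word x
  have h1 := hQ _ he
  have := Subgroup.mul_mem _ h1 (Subgroup.inv_mem _ (Subgroup.pow_mem _ hu (e:ℕ)))
  simpa [mul_assoc] using this

/-! ### the outer automorphism -/

def dm : Matrix (Fin 2) (Fin 2) (ZMod 3) := !![1,0;0,-1]

lemma dm_dm : dm * dm = 1 := by decide

def dAutFun (g : SL23) : SL23 :=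
  ⟨dm * g.1 * dm, by
    have h := g.2
    rw [Matrix.det_mul, Matrix.det_mul, h, show dm.det = -1 by decide]
    decide⟩

lemma dm_cancel (A : Matrix (Fin 2) (Fin 2) (ZMod 3)) : dm * (dm * A * dm) * dm = A := by
  rw [← Matrix.mul_assoc, ← Matrix.mul_assoc, dm_dm, Matrix.one_mul, Matrix.mul_assoc, dm_dm,
    Matrix.mul_one]

def dAut : SL23 ≃* SL23 where
  toFun := dAutFun
  invFun := dAutFun
  left_inv g := Subtype.ext (dm_cancel g.1)
  right_inv g := Subtype.ext (dm_cancel g.1)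
  map_mul' g h := Subtype.ext (by
    show dm * (g.1 * h.1) * dm = (dm * g.1 * dm) * (dm * h.1 * dm)
    simp only [Matrix.mul_assoc]
    rw [← Matrix.mul_assoc dm dm, dm_dm, Matrix.one_mul])

/-! ### lifting pairs mod Zc -/

lemma keyZ : ∀ v w : SL23, (v^3)^2 = 1 → v^2 ≠ 1 → (w^2)^2 = 1 → w^2 ≠ 1 →
    ((v*w)^3)^2 = 1 →
    ∃ s : SL23,
      ((s*u₀*s⁻¹ * v⁻¹)^2 = 1 ∧ (s*t₀*s⁻¹ * w⁻¹)^2 = 1) ∨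
      ((s*(dAutFun u₀)*s⁻¹ * v⁻¹)^2 = 1 ∧ (s*(dAutFun t₀)*s⁻¹ * w⁻¹)^2 = 1) := by
  decide

/-! ### quaternion data -/

lemma keyQ : ∀ y : SL23, y^3 = 1 → y ≠ 1 →
    ∃ P Q : SL23, P^4 = 1 ∧ P^2 ≠ 1 ∧ Q*Q = P^2 ∧ Q*P = P⁻¹*Q ∧
      y*P*y⁻¹ = Q ∧ y*Q*y⁻¹ = P*Q := by
  decide

/-! ### small decide facts -/

lemma u0_cube : u₀^3 = 1 := by decide
lemma u0_ord : u₀^4 ≠ 1 ∧ (u₀^2)^4 ≠ 1 ∧ u₀^2 ≠ 1 ∧ u₀ ≠ 1 := by decide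
lemma t0_sq : t₀^2 = zc := by decide
lemma ut_cube : (u₀*t₀)^3 = zc := by decide
lemma zc_sq : zc^2 = 1 := by decide
lemma zc_q : zc^4 = 1 := by decide
lemma zc_comm' : ∀ x : SL23, x * zc = zc * x := by decide
lemma zc_comm : ∀ x : SL23, Commute x zc := fun x => zc_comm' x
lemma qparity : ∀ v : SL23, (v^3)^4 = 1 → v^4 ≠ 1 →
    (v^3 = 1 ∧ v ≠ 1) ∨ ((zc*v)^3 = 1 ∧ zc*v ≠ 1 ∧ (zc*v)^4 ≠ 1) := by decide
lemma u0_p : u₀^3 = 1 ∧ u₀ ≠ 1 ∧ u₀^4 ≠ 1 := by decide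
lemma Zc_power : ∀ x : SL23, x^2 = 1 → ∃ e : ZMod 2, x = zc ^ e.val := by decide
lemma zpow_ne : ∀ e : ZMod 2, zc ^ e.val = 1 → e = 0 := by decide

/-! ### power homomorphisms from ZMod m -/

lemma powmod {G : Type*} [Monoid G] {x : G} {m : ℕ} (hm : x ^ m = 1) (k : ℕ) :
    x ^ (k % m) = x ^ k := by
  conv_rhs => rw [← Nat.div_add_mod k m]
  rw [pow_add, pow_mul, hm, one_pow, one_mul]

def powHom {H : Type*} [Group H] (m : ℕ) [NeZero m] (h : H) (hm : h ^ m = 1) :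
    Multiplicative (ZMod m) →* H where
  toFun e := h ^ (Multiplicative.toAdd e).val
  map_one' := by
    show h ^ (0 : ZMod m).val = 1
    rw [ZMod.val_zero, pow_zero]
  map_mul' e f := by
    show h ^ ((Multiplicative.toAdd e) + (Multiplicative.toAdd f)).val = _
    rw [ZMod.val_add, powmod hm, pow_add]

lemma powHom_apply {H : Type*} [Group H] (m : ℕ) [NeZero m] (h : H) (hm : h ^ m = 1)
    (e : Multiplicative (ZMod m)) : powHom m h hm e = h ^ (Multiplicative.toAdd e).val := rfl

/-! ### product powers -/

lemma ppow {α β : Type*} [Monoid α] [Monoid β] (a : α) (b : β) (n : ℕ) :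
    ((a,b) : α × β)^n = (a^n, b^n) := by
  induction n with
  | zero => simp; rfl
  | succ n ih => rw [pow_succ, ih, pow_succ, pow_succ]; rfl

/-! ### quaternion group Q₈ -/

open QuaternionGroup in
def σf : QuaternionGroup 2 → QuaternionGroup 2
  | .a k => if k = 0 then .a 0 else if k = 1 then .xa 0 else if k = 2 then .a 2 else .xa 2
  | .xa k => if k = 0 then .xa 3 else if k = 1 then .a 3 else if k = 2 then .xa 1 else .a 1

def σq : QuaternionGroup 2 ≃* QuaternionGroup 2 where
  toFun := σf
  invFun := σf ∘ σf
  left_inv := by decide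
  right_inv := by decide
  map_mul' := by decide

lemma σq_a1 : σq (QuaternionGroup.a 1) = QuaternionGroup.xa 0 := by decide
lemma σq_xa0 : σq (QuaternionGroup.xa 0) = QuaternionGroup.a 1 * QuaternionGroup.xa 0 := by
  decide

lemma qgen : ∀ g : QuaternionGroup 2, ∃ s : Fin 4, ∃ t : Fin 2,
    g = (QuaternionGroup.a 1)^(s:ℕ) * (QuaternionGroup.xa 0)^(t:ℕ) := by decide

/-- two homs out of Q₈ agreeing on the generators agree everywhere -/
lemma qhom_eq {H : Type*} [Monoid H] (f g : QuaternionGroup 2 →* H)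
    (h1 : f (QuaternionGroup.a 1) = g (QuaternionGroup.a 1))
    (h2 : f (QuaternionGroup.xa 0) = g (QuaternionGroup.xa 0)) :
    ∀ x, f x = g x := by
  intro x
  obtain ⟨s, t, rfl⟩ := qgen x
  simp only [map_mul, map_pow, h1, h2]

/-- the diagonal automorphism of Q₈ × Q₈ -/
def τ : MulAut (QuaternionGroup 2 × QuaternionGroup 2) := MulEquiv.prodCongr σq σq

lemma τ_apply (p : QuaternionGroup 2 × QuaternionGroup 2) : τ p = (σq p.1, σq p.2) := rfl

lemma τ_cube : τ ^ 3 = 1 := by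
  have h : ∀ p : QuaternionGroup 2 × QuaternionGroup 2, τ (τ (τ p)) = p := by decide
  refine MulEquiv.ext fun p => ?_
  show (τ^3) p = p
  rw [pow_succ, pow_succ, pow_one, MulAut.mul_apply, MulAut.mul_apply]
  exact h p

/-- construction of a hom Q₈ →* SL23 from generator data -/
lemma quatHom (P Q : SL23) (hP4 : P^4 = 1) (hP2 : P^2 ≠ 1) (hQ2 : Q*Q = P^2)
    (hQP : Q*P = P⁻¹*Q) :
    ∃ ι : QuaternionGroup 2 →* SL23, ι (QuaternionGroup.a 1) = P ∧
      ι (QuaternionGroup.xa 0) = Q ∧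
      Function.Injective ι ∧ (∀ g, (ι g)^4 = 1) := by
  set e : ZMod (2*2) → SL23 := fun k => P ^ k.val with he
  have he_add : ∀ i j, e (i+j) = e i * e j := by
    intro i j
    show P ^ ((i+j).val) = P ^ i.val * P ^ j.val
    rw [ZMod.val_add, powmod hP4, pow_add]
  have he0 : e 0 = 1 := by show P ^ (0 : ZMod (2*2)).val = 1; rw [ZMod.val_zero, pow_zero]
  have he_neg : ∀ i, e (-i) = (e i)⁻¹ := by
    intro i
    have : e (-i) * e i = 1 := by rw [← he_add, neg_add_cancel, he0]
    exact eq_inv_of_mul_eq_one_left this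
  have hQpow : ∀ m : ℕ, Q * P^m = (P^m)⁻¹ * Q := by
    intro m
    induction m with
    | zero => simp
    | succ n ih =>
        rw [pow_succ, ← mul_assoc, ih, mul_assoc, hQP]
        group
  have hQe : ∀ i, Q * e i = e (-i) * Q := by
    intro i; rw [he_neg]; exact hQpow i.val
  have heQ : ∀ i, e i * Q = Q * e (-i) := by
    intro i
    rw [hQe, he_neg, he_neg, inv_inv]
  have he2 : e 2 = P^2 := by
    show P ^ (2 : ZMod (2*2)).val = P^2
    rw [show ((2 : ZMod (2*2))).val = 2 from by decide]
  set F : QuaternionGroup 2 → SL23 := fun g =>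
    match g with
    | .a k => e k
    | .xa k => Q * e k with hF
  have hmul : ∀ g h, F (g * h) = F g * F h := by
    rintro (k | k) (l | l)
    · show e (k + l) = e k * e l
      exact he_add k l
    · show Q * e (l - k) = e k * (Q * e l)
      rw [← mul_assoc, heQ, mul_assoc, ← he_add]
      ring_nf
    · show Q * e (k + l) = Q * e k * e l
      rw [mul_assoc, he_add]
    · show e ((2:ℕ) + l - k) = (Q * e k) * (Q * e l)
      rw [mul_assoc, ← mul_assoc (e k), heQ, mul_assoc Q, ← mul_assoc Q Q, hQ2, ← he2,
        ← he_add, ← he_add]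
      norm_num
      ring_nf
  refine ⟨MonoidHom.mk' F hmul, ?_, ?_, ?_, ?_⟩
  · show e 1 = P
    show P ^ (1 : ZMod (2*2)).val = P
    rw [show ((1 : ZMod (2*2))).val = 1 from by decide, pow_one]
  · show Q * e 0 = Q
    rw [he0, mul_one]
  · have hk4 : ∀ k : ZMod (2*2), k = 0 ∨ k = 1 ∨ k = 2 ∨ k = 3 := by decide
    rw [injective_iff_map_eq_one]
    rintro (k | k) hk
    · rcases hk4 k with rfl | rfl | rfl | rfl
      · rfl
      · exfalso
        have : P = 1 := by
          have h1 : e 1 = 1 := hk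
          rwa [show e 1 = P by
            show P ^ (1 : ZMod (2*2)).val = P
            rw [show ((1 : ZMod (2*2))).val = 1 from by decide, pow_one]] at h1
        rw [this] at hP2; simp at hP2
      · exfalso
        have : P^2 = 1 := by
          have h1 : e 2 = 1 := hk
          rwa [he2] at h1
        exact hP2 this
      · exfalso
        have h3 : P^3 = 1 := by
          have h1 : e 3 = 1 := hk
          rwa [show e 3 = P^3 by
            show P ^ (3 : ZMod (2*2)).val = P^3
            rw [show ((3 : ZMod (2*2))).val = 3 from by decide]] at h1
        have : P = 1 := by
          have h4 := hP4
          rw [pow_succ, h3, one_mul] at h4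
          exact h4
        rw [this] at hP2; simp at hP2
    · exfalso
      have hQ' : Q = (e k)⁻¹ := by
        have := hk
        exact eq_inv_of_mul_eq_one_left this
      have hcomm : Q * P = P * Q := by
        rw [hQ']
        have : Commute P ((P ^ k.val)⁻¹) := (Commute.pow_right (Commute.refl P) k.val).inv_right
        exact this.symm.eq
      rw [hcomm] at hQP
      have hPP : P = P⁻¹ := mul_right_cancel hQP
      have : P^2 = 1 := by
        rw [pow_two]
        nth_rewrite 1 [hPP]
        rw [inv_mul_cancel]
      exact hP2 this
  · rintro (k | k)
    · show (e k)^4 = 1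
      show (P ^ k.val)^4 = 1
      rw [← pow_mul, mul_comm, pow_mul, hP4, one_pow]
    · show (Q * e k)^4 = 1
      have hsq : (Q * e k)^2 = P^2 := by
        rw [pow_two, mul_assoc, ← mul_assoc (e k), heQ, mul_assoc Q, ← mul_assoc Q Q, hQ2]
        rw [← he_add, neg_add_cancel, he0, mul_one]
      calc (Q * e k)^4 = ((Q * e k)^2)^2 := by rw [← pow_mul]
      _ = (P^2)^2 := by rw [hsq]
      _ = 1 := by rw [← pow_mul]; exact hP4

lemma quat_surj (ι : QuaternionGroup 2 →* SL23) (hinj : Function.Injective ι)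
    (h4 : ∀ g, (ι g)^4 = 1) : ∀ x : SL23, x^4 = 1 → ∃ g, ι g = x := by
  intro x hx
  set ι' : QuaternionGroup 2 → Qc := fun g => ⟨ι g, (mem_Qc).mpr (h4 g)⟩ with hι'
  have hinj' : Function.Injective ι' := by
    intro a b hab
    exact hinj (congrArg Subtype.val hab)
  have hcards : Fintype.card (QuaternionGroup 2) = Fintype.card Qc := by
    rw [QuaternionGroup.card, fcard_Qc]
  have hbij : Function.Bijective ι' :=
    (Fintype.bijective_iff_injective_and_card ι').mpr ⟨hinj', hcards⟩
  obtain ⟨g, hg⟩ := hbij.2 ⟨x, (mem_Qc).mpr hx⟩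
  exact ⟨g, congrArg Subtype.val hg⟩

/-! ### case lemmas -/

lemma caseBot (G : Subgroup (SL23 × SL23))
    (hs₁ : ∀ a : SL23, ∃ b, ((a, b) : SL23 × SL23) ∈ G)
    (hM₂ : ∀ x : SL23, ((1,x) : SL23 × SL23) ∈ G ↔ x ∈ (⊥ : Subgroup SL23)) :
    Nonempty (G ≃* SL23) := by
  set p : G →* SL23 := (MonoidHom.fst SL23 SL23).comp G.subtype with hp
  have hinj : Function.Injective p := by
    rw [injective_iff_map_eq_one]
    rintro ⟨⟨a, b⟩, hab⟩ h1
    have ha : a = 1 := h1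
    subst ha
    have : b ∈ (⊥ : Subgroup SL23) := (hM₂ b).mp hab
    simp only [Subgroup.mem_bot] at this
    subst this
    rfl
  have hsurj : Function.Surjective p := by
    intro a
    obtain ⟨b, hb⟩ := hs₁ a
    exact ⟨⟨(a, b), hb⟩, rfl⟩
  exact ⟨MulEquiv.ofBijective p ⟨hinj, hsurj⟩⟩

lemma caseTop (G : Subgroup (SL23 × SL23))
    (hM₁ : ∀ x : SL23, ((x,1) : SL23 × SL23) ∈ G ↔ x ∈ (⊤ : Subgroup SL23))
    (hM₂ : ∀ x : SL23, ((1,x) : SL23 × SL23) ∈ G ↔ x ∈ (⊤ : Subgroup SL23)) :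
    Nonempty (G ≃* SL23 × SL23) := by
  have hG : G = ⊤ := by
    rw [eq_top_iff]
    rintro ⟨a, b⟩ _
    have h1 : ((a, 1) : SL23 × SL23) ∈ G := (hM₁ a).mpr trivial
    have h2 : ((1, b) : SL23 × SL23) ∈ G := (hM₂ b).mpr trivial
    have := G.mul_mem h1 h2
    simpa using this
  exact ⟨(MulEquiv.subgroupCongr hG).trans Subgroup.topEquiv⟩

set_option maxHeartbeats 4000000 in
lemma caseZ (G : Subgroup (SL23 × SL23))
    (hs₁ : ∀ a : SL23, ∃ b, ((a, b) : SL23 × SL23) ∈ G)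
    (hM₁ : ∀ x : SL23, ((x,1) : SL23 × SL23) ∈ G ↔ x ∈ Zc)
    (hM₂ : ∀ x : SL23, ((1,x) : SL23 × SL23) ∈ G ↔ x ∈ Zc) :
    Nonempty (G ≃* SL23 × Multiplicative (ZMod 2)) := by
  have hZ1 : ∀ ζ : SL23, ζ ∈ Zc → ((ζ, 1) : SL23 × SL23) ∈ G := fun ζ h => (hM₁ ζ).mpr h
  have h1Z : ∀ ζ : SL23, ζ ∈ Zc → ((1, ζ) : SL23 × SL23) ∈ G := fun ζ h => (hM₂ ζ).mpr h
  obtain ⟨v, hv⟩ := hs₁ u₀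
  obtain ⟨w, hw⟩ := hs₁ t₀
  -- v³ ∈ Zc
  have hv3 : (v^3)^2 = 1 := by
    have h3 : ((u₀, v) : SL23 × SL23)^3 = (1, v^3) := by rw [ppow, u0_cube]
    have := G.pow_mem hv 3
    rw [h3] at this
    exact (hM₂ _).mp this
  -- v ∉ Zc
  have hv2 : v^2 ≠ 1 := by
    intro hcon
    have h1 : ((1, v) : SL23 × SL23) ∈ G := h1Z v hcon
    have h2 := G.mul_mem hv (G.inv_mem h1)
    have h3 : ((u₀, 1) : SL23 × SL23) ∈ G := by simpa using h2
    have := (hM₁ _).mp h3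
    rw [mem_Zc] at this
    exact u0_ord.2.2.1 this
  -- w² ∈ Zc
  have hw2 : (w^2)^2 = 1 := by
    have h3 : ((t₀, w) : SL23 × SL23)^2 = (zc, w^2) := by rw [ppow, t0_sq]
    have h4 := G.pow_mem hw 2
    rw [h3] at h4
    have h5 := G.mul_mem (G.inv_mem (hZ1 zc (by rw [mem_Zc]; exact zc_sq))) h4
    have h6 : ((1, w^2) : SL23 × SL23) ∈ G := by simpa using h5
    exact (hM₂ _).mp h6
  -- w ∉ Zc
  have hwn : w^2 ≠ 1 := by
    intro hcon
    have h1 : ((1, w) : SL23 × SL23) ∈ G := h1Z w hcon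
    have h2 := G.mul_mem hw (G.inv_mem h1)
    have h3 : ((t₀, 1) : SL23 × SL23) ∈ G := by simpa using h2
    have := (hM₁ _).mp h3
    rw [mem_Zc, t0_sq] at this
    exact u0_ord.2.2.1 (by
      exfalso
      have : zc = 1 := this
      exact absurd this (by decide))
  -- (vw)³ ∈ Zc
  have hvw : ((v*w)^3)^2 = 1 := by
    have hprod : ((u₀ * t₀, v * w) : SL23 × SL23) ∈ G := G.mul_mem hv hw
    have h3 : ((u₀ * t₀, v * w) : SL23 × SL23)^3 = (zc, (v*w)^3) := by rw [ppow, ut_cube]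
    have h4 := G.pow_mem hprod 3
    rw [h3] at h4
    have h5 := G.mul_mem (G.inv_mem (hZ1 zc (by rw [mem_Zc]; exact zc_sq))) h4
    have h6 : ((1, (v*w)^3) : SL23 × SL23) ∈ G := by simpa using h5
    exact (hM₂ _).mp h6
  obtain ⟨s, hcase⟩ := keyZ v w hv3 hv2 hw2 hwn hvw
  -- build the lifted automorphism f
  obtain ⟨f, hfu, hft⟩ : ∃ f : SL23 ≃* SL23, (f u₀ * v⁻¹)^2 = 1 ∧ (f t₀ * w⁻¹)^2 = 1 := by
    rcases hcase with ⟨h1, h2⟩ | ⟨h1, h2⟩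
    · exact ⟨MulAut.conj s, h1, h2⟩
    · exact ⟨dAut.trans (MulAut.conj s), h1, h2⟩
  -- the graph of f is in G
  have hgen : ∀ a : SL23, ((a, f a) : SL23 × SL23) ∈ G := by
    set S : Subgroup SL23 := G.comap ((MonoidHom.id SL23).prod f.toMonoidHom) with hS
    have hmem : ∀ a : SL23, a ∈ S ↔ ((a, f a) : SL23 × SL23) ∈ G := fun a => Iff.rfl
    have hmemu : u₀ ∈ S := by
      rw [hmem]
      have hζ : ((1, f u₀ * v⁻¹) : SL23 × SL23) ∈ G := h1Z _ hfu
      have h2 := G.mul_mem hζ hv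
      have h3 : ((1, f u₀ * v⁻¹) * (u₀, v) : SL23 × SL23) = (u₀, f u₀) := by
        rw [Prod.mk_mul_mk, one_mul, inv_mul_cancel_right]
      rwa [h3] at h2
    have hmemt : t₀ ∈ S := by
      rw [hmem]
      have hζ : ((1, f t₀ * w⁻¹) : SL23 × SL23) ∈ G := h1Z _ hft
      have h2 := G.mul_mem hζ hw
      have h3 : ((1, f t₀ * w⁻¹) * (t₀, w) : SL23 × SL23) = (t₀, f t₀) := by
        rw [Prod.mk_mul_mk, one_mul, inv_mul_cancel_right]
      rwa [h3] at h2
    have hStop : S = ⊤ := by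
      rw [eq_top_iff, ← gen_ut, Subgroup.closure_le]
      rintro x (rfl | rfl)
      exacts [hmemu, hmemt]
    intro a
    exact (hmem a).mp (by rw [hStop]; trivial)
  -- the isomorphism
  set θ₂ : Multiplicative (ZMod 2) →* SL23 := powHom 2 zc zc_sq with hθ₂
  have hθval : ∀ ε, θ₂ ε = zc ^ (Multiplicative.toAdd ε).val := fun _ => rfl
  set Θ : SL23 × Multiplicative (ZMod 2) →* SL23 × SL23 :=
    MonoidHom.mk' (fun p => (p.1, f p.1 * θ₂ p.2)) (by
      rintro ⟨a, ε⟩ ⟨b, η⟩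
      show ((a * b, f (a * b) * θ₂ (ε * η)) : SL23 × SL23)
          = (a * b, (f a * θ₂ ε) * (f b * θ₂ η))
      have hcomm : θ₂ ε * f b = f b * θ₂ ε := by
        rw [hθval]
        exact ((zc_comm (f b)).pow_right _).symm.eq
      have hre : (f a * θ₂ ε) * (f b * θ₂ η) = f a * f b * (θ₂ ε * θ₂ η) := by
        rw [mul_assoc, ← mul_assoc (θ₂ ε), hcomm, mul_assoc, ← mul_assoc, ← mul_assoc]
      rw [map_mul, map_mul, hre]) with hΘ
  have hΘapply : ∀ p : SL23 × Multiplicative (ZMod 2), Θ p = (p.1, f p.1 * θ₂ p.2) :=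
    fun p => rfl
  have hrange : Θ.range = G := by
    apply le_antisymm
    · rintro x ⟨⟨a, ε⟩, rfl⟩
      rw [hΘapply]
      have h1 : ((a, f a) : SL23 × SL23) ∈ G := hgen a
      have h2 : ((1, θ₂ ε) : SL23 × SL23) ∈ G := by
        rw [hθval]
        have : ((1, zc ^ (Multiplicative.toAdd ε).val) : SL23 × SL23)
            = (((1, zc) : SL23 × SL23)) ^ (Multiplicative.toAdd ε).val := by
          rw [ppow, one_pow]
        rw [this]
        exact G.pow_mem (h1Z zc (by rw [mem_Zc]; exact zc_sq)) _
      have := G.mul_mem h1 h2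
      simpa using this
    · rintro ⟨a, b⟩ hab
      have h1 : ((1, (f a)⁻¹ * b) : SL23 × SL23) ∈ G := by
        have := G.mul_mem (G.inv_mem (hgen a)) hab
        simpa using this
      have h2 : (f a)⁻¹ * b ∈ Zc := (hM₂ _).mp h1
      rw [mem_Zc] at h2
      obtain ⟨e, he⟩ := Zc_power _ h2
      refine ⟨(a, Multiplicative.ofAdd e), ?_⟩
      rw [hΘapply]
      show ((a, f a * zc ^ (Multiplicative.toAdd (Multiplicative.ofAdd e)).val)
        : SL23 × SL23) = (a, b)
      rw [toAdd_ofAdd, ← he, mul_inv_cancel_left]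
  have hinj : Function.Injective Θ := by
    rw [injective_iff_map_eq_one]
    rintro ⟨a, ε⟩ h1
    rw [hΘapply] at h1
    have ha : a = 1 := congrArg Prod.fst h1
    subst ha
    have hb : f 1 * θ₂ ε = 1 := congrArg Prod.snd h1
    rw [map_one, one_mul, hθval] at hb
    have : Multiplicative.toAdd ε = 0 := zpow_ne _ hb
    have : ε = 1 := by
      rw [← ofAdd_toAdd ε, this, ofAdd_zero]
    rw [this]
    rfl
  exact ⟨((MonoidHom.ofInjective hinj).trans (MulEquiv.subgroupCongr hrange)).symm.symm.symm⟩

lemma caseQ (G : Subgroup (SL23 × SL23))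
    (hs₁ : ∀ a : SL23, ∃ b, ((a, b) : SL23 × SL23) ∈ G)
    (hM₁ : ∀ x : SL23, ((x,1) : SL23 × SL23) ∈ G ↔ x ∈ Qc)
    (hM₂ : ∀ x : SL23, ((1,x) : SL23 × SL23) ∈ G ↔ x ∈ Qc) :
    Nonempty (G ≃* (QuaternionGroup 2 × QuaternionGroup 2)
      ⋊[powHom 3 τ τ_cube] Multiplicative (ZMod 3)) := by
  have hQ1 : ∀ q : SL23, q ∈ Qc → ((q, 1) : SL23 × SL23) ∈ G := fun q h => (hM₁ q).mpr h
  have h1Q : ∀ q : SL23, q ∈ Qc → ((1, q) : SL23 × SL23) ∈ G := fun q h => (hM₂ q).mpr h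
  obtain ⟨v, hv⟩ := hs₁ u₀
  have hv3 : (v^3)^4 = 1 := by
    have h3 : ((u₀, v) : SL23 × SL23)^3 = (1, v^3) := by rw [ppow, u0_cube]
    have := G.pow_mem hv 3
    rw [h3] at this
    exact (hM₂ _).mp this
  have hvn : v^4 ≠ 1 := by
    intro hcon
    have h1 : ((1, v) : SL23 × SL23) ∈ G := h1Q v hcon
    have h2 := G.mul_mem hv (G.inv_mem h1)
    have h3 : ((u₀, 1) : SL23 × SL23) ∈ G := by
      have he : ((u₀, v) * (1, v)⁻¹ : SL23 × SL23) = (u₀, 1) := by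
        rw [Prod.inv_mk, Prod.mk_mul_mk, inv_one, mul_one, mul_inv_cancel]
      rwa [he] at h2
    exact u0_p.2.2 ((hM₁ _).mp h3)
  -- normalize to an element of order 3
  obtain ⟨y, hyG, hy3, hy1⟩ : ∃ y : SL23, ((u₀, y) : SL23 × SL23) ∈ G ∧ y^3 = 1 ∧ y ≠ 1 := by
    rcases qparity v hv3 hvn with ⟨h1, h2⟩ | ⟨h1, h2, h3⟩
    · exact ⟨v, hv, h1, h2⟩
    · refine ⟨zc * v, ?_, h1, h2⟩
      have hzz : ((1, zc) : SL23 × SL23) ∈ G := h1Q zc (mem_Qc.mpr zc_q)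
      have := G.mul_mem hzz hv
      have he : ((1, zc) * (u₀, v) : SL23 × SL23) = (u₀, zc * v) := by
        rw [Prod.mk_mul_mk, one_mul]
      rwa [he] at this
  -- quaternion generator data for u₀ and y
  obtain ⟨P₁, Q₁, hP₁4, hP₁2, hQ₁2, hQ₁P, hcu₁, hcu₂⟩ := keyQ u₀ u0_p.1 u0_p.2.1
  obtain ⟨P₂, Q₂, hP₂4, hP₂2, hQ₂2, hQ₂P, hcy₁, hcy₂⟩ := keyQ y hy3 hy1
  obtain ⟨ι₁, hι₁a, hι₁x, hι₁inj, hι₁4⟩ := quatHom P₁ Q₁ hP₁4 hP₁2 hQ₁2 hQ₁P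
  obtain ⟨ι₂, hι₂a, hι₂x, hι₂inj, hι₂4⟩ := quatHom P₂ Q₂ hP₂4 hP₂2 hQ₂2 hQ₂P
  -- intertwining
  have hσ₁ : ∀ g, u₀ * ι₁ g * u₀⁻¹ = ι₁ (σq g) := by
    have h := qhom_eq ((MulAut.conj u₀).toMonoidHom.comp ι₁)
      (ι₁.comp σq.toMonoidHom)
      (by show u₀ * ι₁ (QuaternionGroup.a 1) * u₀⁻¹ = ι₁ (σq (QuaternionGroup.a 1))
          rw [hι₁a, σq_a1, hι₁x]; exact hcu₁)
      (by show u₀ * ι₁ (QuaternionGroup.xa 0) * u₀⁻¹ = ι₁ (σq (QuaternionGroup.xa 0))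
          rw [hι₁x, σq_xa0, map_mul, hι₁a, hι₁x]; exact hcu₂)
    intro g
    exact h g
  have hσ₂ : ∀ g, y * ι₂ g * y⁻¹ = ι₂ (σq g) := by
    have h := qhom_eq ((MulAut.conj y).toMonoidHom.comp ι₂)
      (ι₂.comp σq.toMonoidHom)
      (by show y * ι₂ (QuaternionGroup.a 1) * y⁻¹ = ι₂ (σq (QuaternionGroup.a 1))
          rw [hι₂a, σq_a1, hι₂x]; exact hcy₁)
      (by show y * ι₂ (QuaternionGroup.xa 0) * y⁻¹ = ι₂ (σq (QuaternionGroup.xa 0))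
          rw [hι₂x, σq_xa0, map_mul, hι₂a, hι₂x]; exact hcy₂)
    intro g
    exact h g
  -- the homomorphism from the semidirect product
  have hxy3 : ((u₀, y) : SL23 × SL23)^3 = 1 := by
    rw [ppow, u0_cube, hy3]; rfl
  set f₁p : QuaternionGroup 2 × QuaternionGroup 2 →* SL23 × SL23 := ι₁.prodMap ι₂ with hf₁p
  set f₂p : Multiplicative (ZMod 3) →* SL23 × SL23 := powHom 3 ((u₀, y)) hxy3 with hf₂p
  have hf₁pa : ∀ p : QuaternionGroup 2 × QuaternionGroup 2, f₁p p = (ι₁ p.1, ι₂ p.2) :=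
    fun p => rfl
  have hbase : ∀ p : QuaternionGroup 2 × QuaternionGroup 2,
      f₁p (τ p) = (u₀, y) * f₁p p * ((u₀, y) : SL23 × SL23)⁻¹ := by
    intro p
    rw [hf₁pa, hf₁pa, τ_apply, Prod.inv_mk, Prod.mk_mul_mk, Prod.mk_mul_mk]
    exact Prod.ext (hσ₁ p.1).symm (hσ₂ p.2).symm
  have hconj : ∀ (m : ℕ) (p : QuaternionGroup 2 × QuaternionGroup 2),
      f₁p ((τ^m) p) = ((u₀, y) : SL23 × SL23)^m * f₁p p * (((u₀, y) : SL23 × SL23)^m)⁻¹ := by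
    intro m
    induction m with
    | zero => intro p; simp
    | succ n ih =>
        intro p
        have h1 : (τ^(n+1)) p = (τ^n) (τ p) := by
          rw [pow_succ, MulAut.mul_apply]
        rw [h1, ih, hbase]
        group
  have hcompat : ∀ ε : Multiplicative (ZMod 3),
      f₁p.comp ((powHom 3 τ τ_cube ε)).toMonoidHom
        = (MulAut.conj (f₂p ε)).toMonoidHom.comp f₁p := by
    intro ε
    refine MonoidHom.ext fun p => ?_
    show f₁p (((powHom 3 τ τ_cube) ε) p) = (MulAut.conj (f₂p ε)) (f₁p p)
    have he : ((powHom 3 τ τ_cube) ε) p = (τ^(Multiplicative.toAdd ε).val) p := rfl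
    have hee : f₂p ε = ((u₀, y) : SL23 × SL23)^(Multiplicative.toAdd ε).val := rfl
    rw [MulAut.conj_apply, he, hconj, hee]
  set Ψ := SemidirectProduct.lift f₁p f₂p hcompat with hΨdef
  have hΨa : ∀ q : (QuaternionGroup 2 × QuaternionGroup 2)
      ⋊[powHom 3 τ τ_cube] Multiplicative (ZMod 3),
      Ψ q = f₁p q.left * f₂p q.right := fun q => rfl
  -- membership facts
  have hmemf₁ : ∀ p : QuaternionGroup 2 × QuaternionGroup 2, f₁p p ∈ G := by
    intro p
    have h1 : ((ι₁ p.1, 1) : SL23 × SL23) ∈ G := hQ1 _ (mem_Qc.mpr (hι₁4 p.1))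
    have h2 : ((1, ι₂ p.2) : SL23 × SL23) ∈ G := h1Q _ (mem_Qc.mpr (hι₂4 p.2))
    have := G.mul_mem h1 h2
    have he : ((ι₁ p.1, 1) * (1, ι₂ p.2) : SL23 × SL23) = (ι₁ p.1, ι₂ p.2) := by
      rw [Prod.mk_mul_mk, mul_one, one_mul]
    rw [he] at this
    rw [hf₁pa]
    exact this
  have hmemf₂ : ∀ ε, f₂p ε ∈ G := by
    intro ε
    have : f₂p ε = ((u₀, y) : SL23 × SL23)^(Multiplicative.toAdd ε).val := rfl
    rw [this]
    exact G.pow_mem hyG _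
  have hrange : Ψ.range = G := by
    apply le_antisymm
    · rintro x ⟨q, rfl⟩
      rw [hΨa]
      exact G.mul_mem (hmemf₁ _) (hmemf₂ _)
    · rintro ⟨a, b⟩ hab
      obtain ⟨e, he⟩ := coset_word_inv a
      have hAB := G.mul_mem hab (G.inv_mem (G.pow_mem hyG (e:ℕ)))
      have heq : ((a, b) * (((u₀, y) : SL23 × SL23)^(e:ℕ))⁻¹ : SL23 × SL23)
          = (a * (u₀^(e:ℕ))⁻¹, b * (y^(e:ℕ))⁻¹) := by
        rw [ppow, Prod.inv_mk, Prod.mk_mul_mk]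
      rw [heq] at hAB
      have hA : (a * (u₀^(e:ℕ))⁻¹) ∈ Qc := mem_Qc.mpr he
      have hB : (b * (y^(e:ℕ))⁻¹) ∈ Qc := by
        have h1 := G.mul_mem (G.inv_mem (hQ1 _ hA)) hAB
        have he2 : (((a * (u₀^(e:ℕ))⁻¹ : SL23), (1:SL23)))⁻¹
            * ((a * (u₀^(e:ℕ))⁻¹, b * (y^(e:ℕ))⁻¹) : SL23 × SL23)
            = ((1 : SL23), b * (y^(e:ℕ))⁻¹) := by
          rw [Prod.inv_mk, Prod.mk_mul_mk, inv_mul_cancel, inv_one, one_mul]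
        rw [he2] at h1
        exact (hM₂ _).mp h1
      obtain ⟨g₁, hg₁⟩ := quat_surj ι₁ hι₁inj hι₁4 _ (mem_Qc.mp hA)
      obtain ⟨g₂, hg₂⟩ := quat_surj ι₂ hι₂inj hι₂4 _ (mem_Qc.mp hB)
      refine ⟨⟨(g₁, g₂), Multiplicative.ofAdd ((e : ℕ) : ZMod 3)⟩, ?_⟩
      rw [hΨa]
      show f₁p (g₁, g₂) * ((u₀, y) : SL23 × SL23) ^
        (Multiplicative.toAdd (Multiplicative.ofAdd ((e:ℕ) : ZMod 3))).val = (a, b)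
      rw [toAdd_ofAdd, ZMod.val_cast_of_lt (by exact e.isLt), hf₁pa, hg₁, hg₂]
      rw [Prod.mk_mul_mk (a * (u₀^(e:ℕ))⁻¹), ppow]
      rw [inv_mul_cancel_right, inv_mul_cancel_right]
  have hinj : Function.Injective Ψ := by
    rw [injective_iff_map_eq_one]
    rintro ⟨⟨g₁, g₂⟩, ε⟩ h1
    rw [hΨa] at h1
    set m := (Multiplicative.toAdd ε).val with hm
    have h2 : f₂p ε = ((u₀, y) : SL23 × SL23)^m := rfl
    rw [h2, hf₁pa] at h1
    have hfst : ι₁ g₁ * u₀^m = 1 := by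
      have := congrArg Prod.fst h1
      simpa [ppow] using this
    have hsnd : ι₂ g₂ * y^m = 1 := by
      have := congrArg Prod.snd h1
      simpa [ppow] using this
    have hu4 : (u₀^m)^4 = 1 := by
      have hq : ι₁ g₁ = (u₀^m)⁻¹ := eq_inv_of_mul_eq_one_left hfst
      rw [← inv_inv (u₀^m), ← hq, inv_pow, hι₁4, inv_one]
    have hmlt : m < 3 := ZMod.val_lt _
    have hm0 : m = 0 := by
      interval_cases m
      · rfl
      · exfalso; rw [pow_one] at hu4; exact u0_p.2.2 hu4
      · exfalso; exact u0_ord.2.1 hu4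
    rw [hm0, pow_zero, mul_one] at hfst hsnd
    have hg₁1 : g₁ = 1 := hι₁inj (by rw [hfst, map_one])
    have hg₂1 : g₂ = 1 := hι₂inj (by rw [hsnd, map_one])
    have hε : ε = 1 := by
      have h0 : (Multiplicative.toAdd ε) = 0 := (ZMod.val_eq_zero _).mp (hm ▸ hm0)
      rw [← ofAdd_toAdd ε, h0, ofAdd_zero]
    rw [hg₁1, hg₂1, hε]
    rfl
  exact ⟨((MonoidHom.ofInjective hinj).trans (MulEquiv.subgroupCongr hrange)).symm⟩

lemma phi_spec : ∀ x y : QuaternionGroup 2,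
    (powHom 3 τ τ_cube) (Multiplicative.ofAdd 1) (x, y) = (σq x, σq y) := by
  intro x y
  show (τ ^ (Multiplicative.toAdd (Multiplicative.ofAdd (1 : ZMod 3))).val) (x, y) = _
  rw [show (Multiplicative.toAdd (Multiplicative.ofAdd (1 : ZMod 3))).val = 1 from by decide,
    pow_one]
  rfl

end SLaux

set_option maxHeartbeats 1000000 in
open SLaux in
theorem stmt0 (N : Type*) [Group N] [Finite N]
    (K₁ K₂ : Subgroup N) [K₁.Normal] [K₂.Normal]
    (hiso : Nonempty (K₁ ≃* K₂)) (hint : K₁ ⊓ K₂ = ⊥)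
    (hq₁ : Nonempty ((N ⧸ K₁) ≃* SL23)) (hq₂ : Nonempty ((N ⧸ K₂) ≃* SL23)) :
    Nonempty (N ≃* SL23) ∨
    Nonempty (N ≃* SL23 × SL23) ∨
    (∃ σ : QuaternionGroup 2 ≃* QuaternionGroup 2,
      σ (QuaternionGroup.a 1) = QuaternionGroup.xa 0 ∧
      σ (QuaternionGroup.xa 0) = QuaternionGroup.a 1 * QuaternionGroup.xa 0 ∧
      ∃ φ : Multiplicative (ZMod 3) →* MulAut (QuaternionGroup 2 × QuaternionGroup 2),
        (∀ x y : QuaternionGroup 2,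
          φ (Multiplicative.ofAdd 1) (x, y) = (σ x, σ y)) ∧
        Nonempty (N ≃*
          (QuaternionGroup 2 × QuaternionGroup 2) ⋊[φ] Multiplicative (ZMod 3))) ∨
    Nonempty (N ≃* SL23 × Multiplicative (ZMod 2)) := by
  obtain ⟨e₁⟩ := hq₁
  obtain ⟨e₂⟩ := hq₂
  obtain ⟨eK⟩ := hiso
  set f₁ : N →* SL23 := e₁.toMonoidHom.comp (QuotientGroup.mk' K₁) with hf₁
  set f₂ : N →* SL23 := e₂.toMonoidHom.comp (QuotientGroup.mk' K₂) with hf₂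
  have hker₁ : f₁.ker = K₁ := by
    ext n
    simp only [hf₁, MonoidHom.mem_ker, MonoidHom.comp_apply, MulEquiv.coe_toMonoidHom,
      QuotientGroup.mk'_apply]
    rw [MulEquiv.map_eq_one_iff, QuotientGroup.eq_one_iff]
  have hker₂ : f₂.ker = K₂ := by
    ext n
    simp only [hf₂, MonoidHom.mem_ker, MonoidHom.comp_apply, MulEquiv.coe_toMonoidHom,
      QuotientGroup.mk'_apply]
    rw [MulEquiv.map_eq_one_iff, QuotientGroup.eq_one_iff]
  have hs₁' : Function.Surjective f₁ :=
    e₁.surjective.comp (QuotientGroup.mk'_surjective K₁)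
  have hs₂' : Function.Surjective f₂ :=
    e₂.surjective.comp (QuotientGroup.mk'_surjective K₂)
  set Φ : N →* SL23 × SL23 := f₁.prod f₂ with hΦ
  have hkerΦ : Φ.ker = ⊥ := by
    rw [hΦ, MonoidHom.ker_prod, hker₁, hker₂, hint]
  have hΦinj : Function.Injective Φ := (MonoidHom.ker_eq_bot_iff Φ).mp hkerΦ
  set G : Subgroup (SL23 × SL23) := Φ.range with hG
  have ν : N ≃* G := MonoidHom.ofInjective hΦinj
  have hs₁ : ∀ a : SL23, ∃ b, ((a,b) : SL23 × SL23) ∈ G := by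
    intro a
    obtain ⟨n, hn⟩ := hs₁' a
    exact ⟨f₂ n, ⟨n, by rw [← hn]; rfl⟩⟩
  have hs₂ : ∀ b : SL23, ∃ a, ((a,b) : SL23 × SL23) ∈ G := by
    intro b
    obtain ⟨n, hn⟩ := hs₂' b
    exact ⟨f₁ n, ⟨n, by rw [← hn]; rfl⟩⟩
  set M₁ := G.comap (MonoidHom.inl SL23 SL23) with hM₁def
  set M₂ := G.comap (MonoidHom.inr SL23 SL23) with hM₂def
  have memM₁ : ∀ x : SL23, x ∈ M₁ ↔ ((x, 1) : SL23 × SL23) ∈ G := fun x => Iff.rfl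
  have memM₂ : ∀ x : SL23, x ∈ M₂ ↔ ((1, x) : SL23 × SL23) ∈ G := fun x => Iff.rfl
  have hM₁n : M₁.Normal := by
    constructor
    intro x hx c
    obtain ⟨b, hb⟩ := hs₁ c
    rw [memM₁] at hx ⊢
    have := G.mul_mem (G.mul_mem hb hx) (G.inv_mem hb)
    simpa using this
  have hM₂n : M₂.Normal := by
    constructor
    intro x hx c
    obtain ⟨a, ha⟩ := hs₂ c
    rw [memM₂] at hx ⊢
    have := G.mul_mem (G.mul_mem ha hx) (G.inv_mem ha)
    simpa using this
  -- M₂ ≃* K₁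
  have eM₂ : Nonempty (K₁ ≃* M₂) := by
    have hmem : ∀ k : K₁, ((1 : SL23), f₂ (k : N)) ∈ G := by
      intro k
      refine ⟨(k : N), ?_⟩
      have : f₁ (k : N) = 1 := by rw [← MonoidHom.mem_ker, hker₁]; exact k.2
      show (f₁ (k : N), f₂ (k : N)) = _
      rw [this]
    set ψ : K₁ →* M₂ :=
      { toFun := fun k => ⟨f₂ (k : N), (memM₂ _).mpr (hmem k)⟩
        map_one' := Subtype.ext (by
          show f₂ ((1 : K₁) : N) = 1
          rw [OneMemClass.coe_one, map_one])
        map_mul' := fun k l => Subtype.ext (by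
          show f₂ ((k * l : K₁) : N) = f₂ (k : N) * f₂ (l : N)
          rw [MulMemClass.coe_mul, map_mul]) } with hψ
    have hinj : Function.Injective ψ := by
      rw [injective_iff_map_eq_one]
      intro k hk
      have h2 : f₂ (k : N) = 1 := congrArg Subtype.val hk
      have hk2 : (k : N) ∈ K₂ := by rw [← hker₂]; exact h2
      have : (k : N) ∈ K₁ ⊓ K₂ := ⟨k.2, hk2⟩
      rw [hint, Subgroup.mem_bot] at this
      exact Subtype.ext this
    have hsurj : Function.Surjective ψ := by
      rintro ⟨b, hb⟩
      rw [memM₂] at hb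
      obtain ⟨n, hn⟩ := hb
      have h1 : f₁ n = 1 := congrArg Prod.fst hn
      have h2 : f₂ n = b := congrArg Prod.snd hn
      have hn1 : n ∈ K₁ := by rw [← hker₁]; exact h1
      exact ⟨⟨n, hn1⟩, Subtype.ext h2⟩
    exact ⟨MulEquiv.ofBijective ψ ⟨hinj, hsurj⟩⟩
  -- M₁ ≃* K₂
  have eM₁ : Nonempty (K₂ ≃* M₁) := by
    have hmem : ∀ k : K₂, (f₁ (k : N), (1 : SL23)) ∈ G := by
      intro k
      refine ⟨(k : N), ?_⟩
      have : f₂ (k : N) = 1 := by rw [← MonoidHom.mem_ker, hker₂]; exact k.2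
      show (f₁ (k : N), f₂ (k : N)) = _
      rw [this]
    set ψ : K₂ →* M₁ :=
      { toFun := fun k => ⟨f₁ (k : N), (memM₁ _).mpr (hmem k)⟩
        map_one' := Subtype.ext (by
          show f₁ ((1 : K₂) : N) = 1
          rw [OneMemClass.coe_one, map_one])
        map_mul' := fun k l => Subtype.ext (by
          show f₁ ((k * l : K₂) : N) = f₁ (k : N) * f₁ (l : N)
          rw [MulMemClass.coe_mul, map_mul]) } with hψ
    have hinj : Function.Injective ψ := by
      rw [injective_iff_map_eq_one]
      intro k hk
      have h2 : f₁ (k : N) = 1 := congrArg Subtype.val hk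
      have hk2 : (k : N) ∈ K₁ := by rw [← hker₁]; exact h2
      have : (k : N) ∈ K₁ ⊓ K₂ := ⟨hk2, k.2⟩
      rw [hint, Subgroup.mem_bot] at this
      exact Subtype.ext this
    have hsurj : Function.Surjective ψ := by
      rintro ⟨a, ha⟩
      rw [memM₁] at ha
      obtain ⟨n, hn⟩ := ha
      have h1 : f₂ n = 1 := congrArg Prod.snd hn
      have h2 : f₁ n = a := congrArg Prod.fst hn
      have hn2 : n ∈ K₂ := by rw [← hker₂]; exact h1
      exact ⟨⟨n, hn2⟩, Subtype.ext h2⟩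
    exact ⟨MulEquiv.ofBijective ψ ⟨hinj, hsurj⟩⟩
  obtain ⟨γ₁⟩ := eM₁
  obtain ⟨γ₂⟩ := eM₂
  have hcard : Nat.card M₁ = Nat.card M₂ := by
    rw [← Nat.card_congr γ₁.toEquiv, ← Nat.card_congr γ₂.toEquiv,
      ← Nat.card_congr eK.toEquiv]
  have key : (M₁ = ⊥ ∧ M₂ = ⊥) ∨ (M₁ = Zc ∧ M₂ = Zc) ∨ (M₁ = Qc ∧ M₂ = Qc) ∨
      (M₁ = ⊤ ∧ M₂ = ⊤) := by
    rcases normal_classification M₁ hM₁n with h1 | h1 | h1 | h1 <;>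
      rcases normal_classification M₂ hM₂n with h2 | h2 | h2 | h2 <;>
      [ exact Or.inl ⟨h1, h2⟩;
        skip; skip; skip; skip;
        exact Or.inr (Or.inl ⟨h1, h2⟩);
        skip; skip; skip; skip;
        exact Or.inr (Or.inr (Or.inl ⟨h1, h2⟩));
        skip; skip; skip; skip;
        exact Or.inr (Or.inr (Or.inr ⟨h1, h2⟩))] <;>
      · exfalso
        rw [h1, h2] at hcard
        simp only [Subgroup.card_bot, Subgroup.card_top, card_Zc, card_Qc, card_SL] at hcard
        omega
  rcases key with ⟨h1, h2⟩ | ⟨h1, h2⟩ | ⟨h1, h2⟩ | ⟨h1, h2⟩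
  · left
    obtain ⟨π⟩ := caseBot G hs₁ (fun x => by rw [← memM₂, h2])
    exact ⟨ν.trans π⟩
  · right; right; right
    obtain ⟨π⟩ := caseZ G hs₁ (fun x => by rw [← memM₁, h1]) (fun x => by rw [← memM₂, h2])
    exact ⟨ν.trans π⟩
  · right; right; left
    refine ⟨σq, σq_a1, σq_xa0, powHom 3 τ τ_cube, phi_spec, ?_⟩
    obtain ⟨π⟩ := caseQ G hs₁ (fun x => by rw [← memM₁, h1]) (fun x => by rw [← memM₂, h2])
    exact ⟨ν.trans π⟩
  · right; left
    obtain ⟨π⟩ := caseTop G (fun x => by rw [← memM₁, h1]) (fun x => by rw [← memM₂, h2])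
    exact ⟨ν.trans π⟩
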